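/- The total weight of the fundamental domain $T$ is finite: the family of positive real numbers $\left(\,|S_{\bar{n}}|^{-1}\,\right)_{\bar{n} \in N_T^d}$ is summable, i.e. $\sum_{\bar{n} \in N_T^d} \frac{1}{|S_{\bar{n}}|} < \infty$. (Equivalently, the quotient of the Bruhat–Tits building of $PGL_d(\mathbb{F}_q((1/t)))$ by the non-uniform lattice $PGL_d(\mathbb{F}_q[t])$, while infinite, has finite volume.) -/

import Mathlib

open Matrix Polynomial

noncomputable section

/-- `t = X⁻¹` in the Laurent series field `F = 𝔽_q((X))`. -/
def tF (Fq : Type) [Field Fq] : LaurentSeries Fq := HahnSeries.single (-1 : ℤ) (1 : Fq)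

/-- The embedding of the polynomial ring `𝔽_q[t]` into `F = 𝔽_q((X))`, sending the
polynomial variable to `t = X⁻¹`. -/
def polyToF (Fq : Type) [Field Fq] : Polynomial Fq →+* LaurentSeries Fq :=
  Polynomial.eval₂RingHom (HahnSeries.C) (tF Fq)

/-- The lattice `l_n̄ = t^{n₁}𝒪e₁ ⊕ ⋯ ⊕ t^{n_d}𝒪e_d` as an `𝒪`-submodule of `F^d`,
where `𝒪 = 𝔽_q[[X]]` acts on `F = 𝔽_q((X))` via the inclusion, and
`t^{n} = HahnSeries.single (-n) 1`. -/
def lattM (Fq : Type) [Field Fq] {d : ℕ} (n : Fin d → ℤ) :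
    Submodule (PowerSeries Fq) (Fin d → LaurentSeries Fq) :=
  Submodule.span (PowerSeries Fq)
    (Set.range fun i : Fin d =>
      (HahnSeries.single (-(n i)) (1 : Fq) : LaurentSeries Fq) •
        (Pi.single i (1 : LaurentSeries Fq) : Fin d → LaurentSeries Fq))

/-- The image `g L` of an `𝒪`-submodule `L ⊆ F^d` under a matrix `g ∈ M_d(F)`. -/
def actM (Fq : Type) [Field Fq] {d : ℕ} (g : Matrix (Fin d) (Fin d) (LaurentSeries Fq))
    (L : Submodule (PowerSeries Fq) (Fin d → LaurentSeries Fq)) :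
    Submodule (PowerSeries Fq) (Fin d → LaurentSeries Fq) :=
  L.map ((g.mulVecLin).restrictScalars (PowerSeries Fq))

/-- The image `a L` of an `𝒪`-submodule `L ⊆ F^d` under scalar multiplication by `a ∈ F`. -/
def scaleM (Fq : Type) [Field Fq] {d : ℕ} (a : LaurentSeries Fq)
    (L : Submodule (PowerSeries Fq) (Fin d → LaurentSeries Fq)) :
    Submodule (PowerSeries Fq) (Fin d → LaurentSeries Fq) :=
  L.map ((LinearMap.lsmul (LaurentSeries Fq) (Fin d → LaurentSeries Fq) a).restrictScalars
    (PowerSeries Fq))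

/-- The image in `M_d(F)` of a matrix over `𝔽_q[t]`. -/
def glToF (Fq : Type) [Field Fq] {d : ℕ} (γ : GL (Fin d) (Polynomial Fq)) :
    Matrix (Fin d) (Fin d) (LaurentSeries Fq) :=
  (γ : Matrix (Fin d) (Fin d) (Polynomial Fq)).map (polyToF Fq)

/-- The stabilizer `S_n̄ = {γ ∈ GL_d(𝔽_q[t]) : γ l_n̄ = l_n̄}`. -/
def Stab (Fq : Type) [Field Fq] {d : ℕ} (n : Fin d → ℤ) :
    Set (GL (Fin d) (Polynomial Fq)) :=
  {γ | actM Fq (glToF Fq γ) (lattM Fq n) = lattM Fq n}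

/-- `N_T^d`: integer tuples `n₁ ≥ n₂ ≥ ⋯ ≥ n_d = 0`. -/
def NT {d : ℕ} (n : Fin d → ℤ) : Prop :=
  (∀ i j : Fin d, i ≤ j → n j ≤ n i) ∧ ∀ i : Fin d, (i : ℕ) = d - 1 → n i = 0

/-- The difference sequence `m_i = n_i - n_{i+1}`. -/
def mdiff {d : ℕ} (n : Fin d → ℤ) (i : ℕ) (h : i + 1 < d) : ℤ :=
  n ⟨i, Nat.lt_of_succ_lt h⟩ - n ⟨i + 1, h⟩

end

section Aux
variable (Fq : Type) [Field Fq]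

lemma algebraMap_single (a : Fq) (m : ℕ) :
    (algebraMap (PowerSeries Fq) (LaurentSeries Fq)) (PowerSeries.C a * PowerSeries.X ^ m)
      = HahnSeries.single (m : ℤ) a := by
  rw [LaurentSeries.coe_algebraMap, _root_.map_mul, map_pow, HahnSeries.ofPowerSeries_C,
    HahnSeries.ofPowerSeries_X, HahnSeries.single_pow]
  simp [HahnSeries.C_apply, HahnSeries.single_mul_single]

lemma smul_pi_single {d : ℕ} (c : LaurentSeries Fq) (i : Fin d) (x : LaurentSeries Fq) :
    c • (Pi.single i x : Fin d → LaurentSeries Fq) = Pi.single i (c * x) := by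
  rw [← Pi.single_smul' i c x]; rfl

lemma psmul_pi_single {d : ℕ} (s : PowerSeries Fq) (i : Fin d) (x : LaurentSeries Fq) :
    s • (Pi.single i x : Fin d → LaurentSeries Fq) = Pi.single i (s • x) := by
  funext j
  simp only [Pi.smul_apply, Pi.single_apply]
  split
  · rfl
  · exact smul_zero (M := LaurentSeries Fq) s

lemma mem_latt {d : ℕ} (n : Fin d → ℤ) (i : Fin d) (k : ℤ) (a : Fq) (hk : -(n i) ≤ k) :
    (Pi.single i (HahnSeries.single k a) : Fin d → LaurentSeries Fq) ∈ lattM Fq n := by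
  have hgen : ((HahnSeries.single (-(n i)) (1 : Fq) : LaurentSeries Fq) •
      (Pi.single i (1 : LaurentSeries Fq) : Fin d → LaurentSeries Fq)) ∈ lattM Fq n :=
    Submodule.subset_span ⟨i, rfl⟩
  have h := Submodule.smul_mem _ (PowerSeries.C a * PowerSeries.X ^ (k + n i).toNat) hgen
  convert h using 1
  rw [smul_pi_single, mul_one, psmul_pi_single]
  have : ((PowerSeries.C (R := Fq)) a * PowerSeries.X ^ (k + n i).toNat) •
      (HahnSeries.single (-(n i)) (1:Fq) : LaurentSeries Fq)
      = HahnSeries.single k a := by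
    rw [Algebra.smul_def, algebraMap_single, HahnSeries.single_mul_single, mul_one]
    have h2 : ((k + n i).toNat : ℤ) = k + n i := Int.toNat_of_nonneg (by omega)
    rw [h2]
    ring_nf
  rw [this]
end Aux

section Aux2
variable (Fq : Type) [Field Fq]

lemma polyToF_monomial (k : ℕ) (a : Fq) :
    polyToF Fq (Polynomial.monomial k a) = HahnSeries.single (-(k:ℤ)) a := by
  rw [polyToF, Polynomial.coe_eval₂RingHom, Polynomial.eval₂_monomial, tF,
    HahnSeries.single_pow, HahnSeries.C_apply, HahnSeries.single_mul_single]
  simp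

lemma mem_latt_poly {d : ℕ} (n : Fin d → ℤ) (j i : Fin d) (p : Polynomial Fq)
    (hp : ∀ k ∈ p.support, (k : ℤ) ≤ n j - n i) :
    (Pi.single j (polyToF Fq p * HahnSeries.single (-(n i)) (1:Fq)) :
      Fin d → LaurentSeries Fq) ∈ lattM Fq n := by
  have hpoly : polyToF Fq p
      = ∑ k ∈ p.support, (HahnSeries.single (-(k:ℤ)) (p.coeff k) : LaurentSeries Fq) := by
    conv_lhs => rw [p.as_sum_support]
    rw [map_sum]
    exact Finset.sum_congr rfl fun k _ => polyToF_monomial Fq k _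
  have heq : (Pi.single j (polyToF Fq p * HahnSeries.single (-(n i)) (1:Fq)) :
      Fin d → LaurentSeries Fq)
      = ∑ k ∈ p.support, (Pi.single j
          ((HahnSeries.single (-(k:ℤ)) (p.coeff k) : LaurentSeries Fq) *
            HahnSeries.single (-(n i)) (1:Fq)) : Fin d → LaurentSeries Fq) := by
    rw [hpoly, Finset.sum_mul]
    exact map_sum (LinearMap.single (PowerSeries Fq) (fun _ : Fin d => LaurentSeries Fq) j) _ _
  rw [heq]
  refine Submodule.sum_mem _ fun k hk => ?_
  rw [HahnSeries.single_mul_single, mul_one]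
  exact mem_latt Fq n j _ _ (by have := hp k hk; omega)

end Aux2

section M
variable {Fq : Type} [Field Fq] {d : ℕ}

noncomputable def Bm (i0 : Fin d) (P : Fin d → Polynomial Fq) : Matrix (Fin d) (Fin d) (Polynomial Fq) :=
  ∑ j, Matrix.single i0 j (P j)

lemma Bm_mul (i0 : Fin d) {P : Fin d → Polynomial Fq} (hP : P i0 = 0)
    (Q : Fin d → Polynomial Fq) : Bm i0 P * Bm i0 Q = 0 := by
  rw [Bm, Bm, Finset.sum_mul_sum]
  refine Finset.sum_eq_zero fun j _ => Finset.sum_eq_zero fun j' _ => ?_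
  rcases eq_or_ne j i0 with rfl | h
  · rw [hP, Matrix.single_zero, zero_mul]
  · exact Matrix.single_mul_single_of_ne _ i0 j _ h _

lemma Bm_add (i0 : Fin d) (P Q : Fin d → Polynomial Fq) :
    Bm i0 P + Bm i0 Q = Bm i0 (P + Q) := by
  rw [Bm, Bm, Bm, ← Finset.sum_add_distrib]
  exact Finset.sum_congr rfl fun j _ => (Matrix.single_add i0 j _ _).symm

lemma Bm_zero (i0 : Fin d) : Bm i0 (0 : Fin d → Polynomial Fq) = 0 := by
  rw [Bm]
  exact Finset.sum_eq_zero fun j _ => by simp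

lemma Am_mul (i0 : Fin d) {P : Fin d → Polynomial Fq} (hP : P i0 = 0) :
    (1 + Bm i0 P) * (1 + Bm i0 (-P)) = 1 := by
  rw [add_mul, mul_add, mul_add, one_mul, one_mul, mul_one, Bm_mul i0 hP]
  rw [add_zero, add_assoc, Bm_add]
  simp [Bm_zero]

noncomputable def gammaM (i0 : Fin d) (P : Fin d → Polynomial Fq) (hP : P i0 = 0) :
    GL (Fin d) (Polynomial Fq) :=
  ⟨1 + Bm i0 P, 1 + Bm i0 (-P), Am_mul i0 hP,
    by have := Am_mul i0 (P := -P) (by simp [hP]); rwa [neg_neg] at this⟩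

lemma Bm_entry (i0 : Fin d) (P : Fin d → Polynomial Fq) (r c : Fin d) :
    Bm i0 P r c = if i0 = r then P c else 0 := by
  rw [Bm, Matrix.sum_apply]
  simp only [Matrix.single, Matrix.of_apply]
  rcases eq_or_ne i0 r with rfl | h
  · simp
  · simp [h]

lemma Am_entry (i0 : Fin d) (P : Fin d → Polynomial Fq) (r c : Fin d) :
    (1 + Bm i0 P) r c = (if r = c then 1 else 0) + (if i0 = r then P c else 0) := by
  rw [Matrix.add_apply, Bm_entry, Matrix.one_apply]

end M

section M2
variable {Fq : Type} [Field Fq] {d : ℕ}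

lemma mulVec_map_single (M : Matrix (Fin d) (Fin d) (Polynomial Fq)) (i : Fin d)
    (x : LaurentSeries Fq) :
    (M.map ⇑(polyToF Fq)).mulVec (Pi.single i x) = fun r => polyToF Fq (M r i) * x := by
  funext r
  rw [Matrix.mulVec, dotProduct]
  rw [Finset.sum_eq_single i]
  · rw [Matrix.map_apply, Pi.single_eq_same]
  · intro b _ hb
    rw [Pi.single_eq_of_ne hb, mul_zero]
  · intro h; exact absurd (Finset.mem_univ i) h

lemma image_gen_mem (i0 : Fin d) (n : Fin d → ℤ) (P : Fin d → Polynomial Fq)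
    (hdeg : ∀ i, ∀ k ∈ (P i).support, (k : ℤ) ≤ n i0 - n i) (i : Fin d) :
    ((1 + Bm i0 P).map ⇑(polyToF Fq)).mulVec
      (Pi.single i (HahnSeries.single (-(n i)) (1:Fq))) ∈ lattM Fq n := by
  rw [mulVec_map_single]
  set x : LaurentSeries Fq := HahnSeries.single (-(n i)) (1:Fq) with hx
  have heq : (fun r => polyToF Fq ((1 + Bm i0 P) r i) * x)
      = (Pi.single i x : Fin d → LaurentSeries Fq)
        + Pi.single i0 (polyToF Fq (P i) * x) := by
    funext r
    rw [Am_entry, map_add, add_mul, Pi.add_apply, Pi.single_apply, Pi.single_apply]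
    congr 1
    · rcases eq_or_ne r i with rfl | h
      · simp
      · simp [h]
    · rcases eq_or_ne i0 r with rfl | h
      · simp
      · simp [h, Ne.symm h]
  rw [heq]
  refine Submodule.add_mem _ ?_ (mem_latt_poly Fq n i0 i (P i) (hdeg i))
  exact mem_latt Fq n i (-(n i)) (1:Fq) le_rfl

end M2



section M3
variable {Fq : Type} [Field Fq] {d : ℕ}

lemma actM_le (g : Matrix (Fin d) (Fin d) (LaurentSeries Fq)) (n : Fin d → ℤ)
    (h : ∀ i : Fin d, g.mulVec
      ((HahnSeries.single (-(n i)) (1:Fq) : LaurentSeries Fq) •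
        (Pi.single i 1 : Fin d → LaurentSeries Fq)) ∈ lattM Fq n) :
    actM Fq g (lattM Fq n) ≤ lattM Fq n := by
  rw [actM]
  conv_lhs => rw [lattM]
  rw [Submodule.map_span_le]
  rintro m ⟨i, rfl⟩
  exact h i

lemma actM_one (L : Submodule (PowerSeries Fq) (Fin d → LaurentSeries Fq)) :
    actM Fq 1 L = L := by
  rw [actM]
  convert Submodule.map_id L using 2
  ext v j
  simp

lemma actM_mul (g g' : Matrix (Fin d) (Fin d) (LaurentSeries Fq))
    (L : Submodule (PowerSeries Fq) (Fin d → LaurentSeries Fq)) :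
    actM Fq g (actM Fq g' L) = actM Fq (g * g') L := by
  rw [actM, actM, actM, ← Submodule.map_comp]
  congr 1
  ext v j
  simp [Matrix.mulVec_mulVec]

lemma actM_eq (g g' : Matrix (Fin d) (Fin d) (LaurentSeries Fq))
    (L : Submodule (PowerSeries Fq) (Fin d → LaurentSeries Fq))
    (hgg' : g * g' = 1) (h1 : actM Fq g L ≤ L) (h2 : actM Fq g' L ≤ L) :
    actM Fq g L = L := by
  refine le_antisymm h1 ?_
  have : L = actM Fq g (actM Fq g' L) := by rw [actM_mul, hgg', actM_one]
  calc L = actM Fq g (actM Fq g' L) := this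
    _ ≤ actM Fq g L := Submodule.map_mono h2

lemma gamma_mem_stab (i0 : Fin d) (n : Fin d → ℤ) (P : Fin d → Polynomial Fq)
    (hP : P i0 = 0) (hdeg : ∀ i, ∀ k ∈ (P i).support, (k : ℤ) ≤ n i0 - n i) :
    gammaM i0 P hP ∈ Stab Fq n := by
  show actM Fq (glToF Fq (gammaM i0 P hP)) (lattM Fq n) = lattM Fq n
  have hco : glToF Fq (gammaM i0 P hP) = (1 + Bm i0 P).map ⇑(polyToF Fq) := rfl
  have hmul : ((1 + Bm i0 P).map ⇑(polyToF Fq)) * ((1 + Bm i0 (-P)).map ⇑(polyToF Fq)) = 1 := by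
    rw [← Matrix.map_mul, Am_mul i0 hP, Matrix.map_one _ (map_zero _) (map_one _)]
  rw [hco]
  refine actM_eq _ ((1 + Bm i0 (-P)).map ⇑(polyToF Fq)) _ hmul ?_ ?_
  · refine actM_le _ n fun i => ?_
    rw [smul_pi_single, mul_one]
    exact image_gen_mem i0 n P hdeg i
  · refine actM_le _ n fun i => ?_
    rw [smul_pi_single, mul_one]
    refine image_gen_mem i0 n (-P) (fun i' k hk => hdeg i' k ?_) i
    rwa [Pi.neg_apply, Polynomial.support_neg] at hk

end M3

section M4
variable {Fq : Type} [Field Fq] [Fintype Fq] {d : ℕ}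

lemma gammaM_inj (i0 : Fin d) (P Q : Fin d → Polynomial Fq) (hP : P i0 = 0) (hQ : Q i0 = 0)
    (h : gammaM i0 P hP = gammaM i0 Q hQ) : P = Q := by
  have hm : (1 : Matrix (Fin d) (Fin d) (Polynomial Fq)) + Bm i0 P = 1 + Bm i0 Q :=
    congrArg Units.val h
  have hB : Bm i0 P = Bm i0 Q := by
    have := add_left_cancel hm
    exact this
  funext c
  have h2 : Bm i0 P i0 c = Bm i0 Q i0 c := by rw [hB]
  rwa [Bm_entry, Bm_entry, if_pos rfl, if_pos rfl] at h2

lemma support_lt_of_mem_degreeLT {m : ℕ} {p : Polynomial Fq} (hp : p ∈ Polynomial.degreeLT Fq m)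
    {k : ℕ} (hk : k ∈ p.support) : k < m := by
  rw [Polynomial.mem_degreeLT] at hp
  have h1 : (k : WithBot ℕ) ≤ p.degree := Polynomial.le_degree_of_ne_zero
    (Polynomial.mem_support_iff.mp hk)
  have := lt_of_le_of_lt h1 hp
  exact_mod_cast this

lemma eq_zero_of_mem_degreeLT_zero {p : Polynomial Fq} (hp : p ∈ Polynomial.degreeLT Fq 0) :
    p = 0 := by
  by_contra h
  have := support_lt_of_mem_degreeLT hp (Polynomial.mem_support_iff.mpr
    (Polynomial.leadingCoeff_ne_zero.mpr h))
  omega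

lemma card_degreeLT (m : ℕ) :
    Nat.card (Polynomial.degreeLT Fq m) = Fintype.card Fq ^ m := by
  rw [Nat.card_congr (Polynomial.degreeLTEquiv Fq m).toEquiv]
  rw [Nat.card_fun]
  simp [Nat.card_eq_fintype_card]

lemma card_stab_ge (n : Fin d → ℤ) (i0 : Fin d) (hmono : ∀ j, n j ≤ n i0)
    (hfin : Finite ↥(Stab Fq (d := d) n)) :
    (Fintype.card Fq : ℕ) ^ (∑ j, (n i0 - n j).toNat) ≤ Nat.card ↥(Stab Fq (d := d) n) := by
  classical
  set N : Fin d → ℕ := fun j => (n i0 - n j).toNat with hN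
  have h0 : ∀ P : (Π j : Fin d, Polynomial.degreeLT Fq (N j)),
      (fun j => (P j : Polynomial Fq)) i0 = 0 := by
    intro P
    have : N i0 = 0 := by simp [hN]
    exact eq_zero_of_mem_degreeLT_zero (by rw [← this]; exact (P i0).2)
  set ι : (Π j : Fin d, Polynomial.degreeLT Fq (N j)) → ↥(Stab Fq (d := d) n) :=
    fun P => ⟨gammaM i0 (fun j => (P j : Polynomial Fq)) (h0 P),
      gamma_mem_stab i0 n _ (h0 P) (by
        intro i k hk
        have h1 : k < N i := support_lt_of_mem_degreeLT (P i).2 hk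
        have h2 : (0:ℤ) ≤ n i0 - n i := by have := hmono i; omega
        simp only [hN] at h1
        omega)⟩ with hι
  have hinj : Function.Injective ι := by
    intro P Q h
    have := gammaM_inj i0 _ _ (h0 P) (h0 Q) (Subtype.ext_iff.mp h)
    funext j
    exact Subtype.ext (congrFun this j)
  have hcard := Nat.card_le_card_of_injective ι hinj
  have : Nat.card (Π j : Fin d, Polynomial.degreeLT Fq (N j))
      = Fintype.card Fq ^ (∑ j, N j) := by
    rw [Nat.card_pi]
    rw [← Finset.prod_pow_eq_pow_sum]
    exact Finset.prod_congr rfl fun j _ => card_degreeLT (N j)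
  rwa [this] at hcard

end M4

section M5
variable {Fq : Type} [Field Fq] [Fintype Fq]

lemma summable_pi_geom (k : ℕ) {r : ℝ} (h0 : 0 ≤ r) (h1 : r < 1) :
    Summable (fun m : Fin k → ℕ => ∏ j, r ^ (m j)) := by
  induction k with
  | zero => exact Summable.of_finite
  | succ k ih =>
    rw [← (Fin.consEquiv (fun _ : Fin (k+1) => ℕ)).summable_iff]
    have heq : ((fun m : Fin (k+1) → ℕ => ∏ j, r ^ m j) ∘ (Fin.consEquiv (fun _ => ℕ)))
        = fun p : ℕ × (Fin k → ℕ) => r ^ p.1 * ∏ j : Fin k, r ^ (p.2 j) := by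
      funext p
      simp [Fin.consEquiv, Fin.prod_univ_succ]
    rw [heq]
    exact Summable.mul_of_nonneg (f := fun x : ℕ => r ^ x)
      (g := fun m : Fin k → ℕ => ∏ j, r ^ m j)
      (summable_geometric_of_lt_one h0 h1) ih
      (fun x => pow_nonneg h0 x) (fun m => Finset.prod_nonneg fun j _ => pow_nonneg h0 _)


end M5

open Matrix Polynomial in
/-- the total weight of the fundamental domain is finite: the family
`(1/|S_n̄|)_{n̄ ∈ N_T^d}` of positive reals is summable. -/
theorem covolume_finite (Fq : Type) [Field Fq] [Fintype Fq] (d : ℕ) (hd : 2 ≤ d) :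
    Summable (fun n : {n : Fin d → ℤ // NT n} => ((Nat.card (Stab Fq n.1) : ℝ))⁻¹) := by
  have hq : 1 < Fintype.card Fq := Fintype.one_lt_card
  have hqR : (1:ℝ) < (Fintype.card Fq : ℝ) := by exact_mod_cast hq
  set i0 : Fin d := ⟨0, by omega⟩ with hi0
  set lastI : Fin d := ⟨d-1, by omega⟩ with hlastI
  set e : {n : Fin d → ℤ // NT n} → (Fin d → ℕ) :=
    fun n j => (n.1 i0 - n.1 j).toNat with he
  have hmono : ∀ (n : {n : Fin d → ℤ // NT n}) (j : Fin d), n.1 j ≤ n.1 i0 :=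
    fun n j => n.2.1 i0 j (by simp [hi0, Fin.le_def])
  have hlast : ∀ (n : {n : Fin d → ℤ // NT n}), n.1 lastI = 0 := fun n => n.2.2 lastI rfl
  have hnonneg : ∀ (n : {n : Fin d → ℤ // NT n}) (j : Fin d), 0 ≤ n.1 j := by
    intro n j
    have := n.2.1 j lastI (by simp [hlastI, Fin.le_def]; omega)
    rw [hlast n] at this
    exact this
  have hinj : Function.Injective e := by
    intro n n' h
    have h0 : n.1 i0 = n'.1 i0 := by
      have := congrFun h lastI
      simp only [he, hlast] at this
      have h1 := hnonneg n i0
      have h2 := hnonneg n' i0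
      omega
    apply Subtype.ext
    funext j
    have := congrFun h j
    simp only [he] at this
    have h1 := hmono n j
    have h2 := hmono n' j
    omega
  set g : (Fin d → ℕ) → ℝ := fun m => ∏ j, ((Fintype.card Fq : ℝ))⁻¹ ^ (m j) with hg
  have hgsum : Summable g := summable_pi_geom d (by positivity) (inv_lt_one_of_one_lt₀ hqR)
  refine Summable.of_nonneg_of_le (fun n => by positivity) (fun n => ?_) (hgsum.comp_injective hinj)
  show ((Nat.card (Stab Fq n.1) : ℝ))⁻¹ ≤ g (e n)
  have hgval : g (e n) = ((Fintype.card Fq : ℝ) ^ (∑ j, (n.1 i0 - n.1 j).toNat))⁻¹ := by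
    rw [hg]
    simp only [he]
    rw [Finset.prod_pow_eq_pow_sum, inv_pow]
  rw [hgval]
  rcases finite_or_infinite ↥(Stab Fq (d := d) n.1) with hfin | hinf
  · have hcard := card_stab_ge n.1 i0 (hmono n) hfin
    have hpos : (0:ℝ) < (Fintype.card Fq : ℝ) ^ (∑ j, (n.1 i0 - n.1 j).toNat) := by positivity
    refine inv_anti₀ hpos ?_
    exact_mod_cast hcard
  · rw [Nat.card_eq_zero_of_infinite, Nat.cast_zero, _root_.inv_zero]
    positivity
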